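/- arXiv:2302.06606 — 2 statements merged into one kernel-verified Lean document; each statement's English description precedes it below -/
import Mathlib

section
/- (Deterministic form of the AVLPR guarantee with infrequent policy updates.) Let MG be an m-player finite Markov game, T ∈ ℕ, and let I: [T] → {0,1,…,T−1} satisfy I_t ≤ t−1 for all t. Suppose given Markov joint policies π^1,…,π^T with π^t = π^{I_t+1} for all t ∈ [T], functions \bar V^{u}_{i,h}: S → ℝ (with \bar V^{u}_{i,H+1} ≡ 0) and bonus functions g^{u}_{i,h}: S → [0,∞) for the relevant indices u, such that: (a) for every t ∈ [T], writing u = I_t, for all i ∈ [m], h ∈ [H], s ∈ S: max_{μ_i ∈ Δ(A_i)} (D_{μ_i×π^{u+1}_{-i,h}} − D_{π^{u+1}_h})[ r_{i,h} + P_h \bar V^{u+1}_{i,h+1} ](s) ≤ g^{u}_{i,h}(s), and min{ D_{π^{u+1}_h}[ r_{i,h} + P_h \bar V^{u+1}_{i,h+1} ](s) + g^{u}_{i,h}(s), H−h+1 } ≤ \bar V^{u+1}_{i,h}(s) ≤ D_{π^{u+1}_h}[ r_{i,h} + P_h \bar V^{u+1}_{i,h+1} ](s) + 2 g^{u}_{i,h}(s);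 (b) for every t ∈ [T], i ∈ [m], h ∈ [H], s ∈ S: g^{I_t}_{i,h}(s) ≤ 8 g^{t−1}_{i,h}(s); (c) for some B ≥ 0 and all i ∈ [m], h ∈ [H]: Σ_{t=1}^{T} E_{s_h ∼ π^t}[ g^{t−1}_{i,h}(s_h) ] ≤ B. Then CCEReg(T) := max_{i∈[m]} Σ_{t=1}^T [ V^{†,π^t_{-i}}_{i,1}(s_1) − V^{π^t}_{i,1}(s_1) ]_+ ≤ 16 H B. -/
open Finset

/-- A probability vector on a finite type. -/
def IsDist {α : Type*} [Fintype α] (p : α → ℝ) : Prop :=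
  (∀ a, 0 ≤ p a) ∧ ∑ a, p a = 1

/-- Combine player `i`'s action with a profile of actions of the other players into a
joint action. -/
def combine {m : ℕ} {A : Fin m → Type*} (i : Fin m) (ai : A i)
    (an : ∀ j : {j : Fin m // j ≠ i}, A j.1) (j : Fin m) : A j :=
  if h : j = i then cast (congrArg A h).symm ai else an ⟨j, h⟩

/-- Restrict a joint action to the players other than `i`. -/
def restrict {m : ℕ} {A : Fin m → Type*} (i : Fin m) (a : ∀ j, A j)
    (j : {j : Fin m // j ≠ i}) : A j.1 :=
  a j.1

/-- Marginal, on the actions of all players other than `i`, of a distribution `p` over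
joint actions. -/
noncomputable def marg {m : ℕ} {A : Fin m → Type*} [∀ j, Fintype (A j)] (i : Fin m)
    (p : (∀ j, A j) → ℝ) (an : ∀ j : {j : Fin m // j ≠ i}, A j.1) : ℝ :=
  ∑ ai : A i, p (combine i ai an)

/-- The value function `V^π_h(s)` of a Markov joint policy `π` (zero-based steps,
`jointV H P rew π H s = 0`). -/
noncomputable def jointV {S : Type*} [Fintype S] {m : ℕ} {A : Fin m → Type*}
    [∀ j, Fintype (A j)] (H : ℕ) (P : ℕ → S → (∀ j, A j) → S → ℝ)
    (rew : ℕ → S → (∀ j, A j) → ℝ) (π : ℕ → S → (∀ j, A j) → ℝ) : ℕ → S → ℝ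
  | h, s =>
    if _hh : h < H then
      ∑ a, π h s a * (rew h s a + ∑ s', P h s a s' * jointV H P rew π (h + 1) s')
    else 0
  termination_by h _ => H - h
  decreasing_by omega

/-- The distribution of the state `s_h` at step `h` when running the Markov joint
policy `π` from the initial state `s1` (zero-based steps). -/
noncomputable def stateDist {S : Type*} [Fintype S] [DecidableEq S] {m : ℕ}
    {A : Fin m → Type*} [∀ j, Fintype (A j)]
    (P : ℕ → S → (∀ j, A j) → S → ℝ) (π : ℕ → S → (∀ j, A j) → ℝ) (s1 : S) :
    ℕ → S → ℝ
  | 0, s => if s = s1 then 1 else 0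
  | (h + 1), s' => ∑ s, ∑ a, stateDist P π s1 h s * π h s a * P h s a s'


set_option linter.unusedSectionVars false
section
variable {S : Type*} [Fintype S] [DecidableEq S] {m : ℕ} {A : Fin m → Type*} [∀ j, Fintype (A j)]

lemma combine_self {i : Fin m} (ai : A i) (an : ∀ j : {j : Fin m // j ≠ i}, A j.1) :
    combine i ai an i = ai := by unfold combine; simp

lemma combine_ne {i : Fin m} (ai : A i) (an) {j : Fin m} (h : j ≠ i) :
    combine i ai an j = an ⟨j, h⟩ := by unfold combine; simp [h]

lemma combine_restrict {i : Fin m} (a : ∀ j, A j) :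
    combine i (a i) (_root_.restrict i a) = a := by
  funext j; by_cases h : j = i
  · subst h; exact combine_self _ _
  · rw [combine_ne _ _ h]; rfl

lemma restrict_combine {i : Fin m} (ai : A i) (an) :
    _root_.restrict i (combine i ai an) = an := by
  funext j; unfold _root_.restrict; exact combine_ne _ _ j.2

def combEquiv (i : Fin m) : (∀ j, A j) ≃ (A i × ∀ j : {j : Fin m // j ≠ i}, A j.1) where
  toFun a := (a i, _root_.restrict i a)
  invFun p := combine i p.1 p.2
  left_inv a := combine_restrict a
  right_inv p := by
    cases' p with ai an
    simp [combine_self, restrict_combine]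

lemma sum_split {i : Fin m} (F : A i → (∀ j : {j : Fin m // j ≠ i}, A j.1) → ℝ) :
    ∑ a : ∀ j, A j, F (a i) (_root_.restrict i a) = ∑ ai, ∑ an, F ai an :=
  calc ∑ a : ∀ j, A j, F (a i) (_root_.restrict i a)
      = ∑ p : A i × (∀ j : {j : Fin m // j ≠ i}, A j.1), F p.1 p.2 :=
        Equiv.sum_comp (combEquiv i) (fun p => F p.1 p.2)
    _ = _ := Fintype.sum_prod_type (f := fun p => F p.1 p.2)

lemma marg_nonneg {i : Fin m} {p : (∀ j, A j) → ℝ} (hp : ∀ a, 0 ≤ p a) (an) :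
    0 ≤ marg i p an := Finset.sum_nonneg fun _ _ => hp _

lemma sum_marg {i : Fin m} (p : (∀ j, A j) → ℝ) :
    ∑ an, marg i p an = ∑ a, p a := by
  unfold marg
  rw [Finset.sum_comm, ← sum_split (fun ai an => p (combine i ai an))]
  exact Finset.sum_congr rfl (fun a _ => by rw [combine_restrict])

lemma prodDist {i : Fin m} {f : A i → ℝ} {p : (∀ j, A j) → ℝ} (hf : IsDist f)
    (hp : IsDist p) :
    IsDist (fun a : ∀ j, A j => f (a i) * marg i p (_root_.restrict i a)) := by
  refine ⟨fun a => mul_nonneg (hf.1 _) (marg_nonneg hp.1 _), ?_⟩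
  rw [sum_split (fun ai an => f ai * marg i p an)]
  have : ∀ ai : A i, ∑ an, f ai * marg i p an = f ai * ∑ an, marg i p an := by
    intro ai; rw [Finset.mul_sum]
  simp only [this, ← Finset.sum_mul]
  rw [sum_marg, hp.2, mul_one, hf.2]

lemma jointV_lt {H : ℕ} {P : ℕ → S → (∀ j, A j) → S → ℝ}
    {rew π : ℕ → S → (∀ j, A j) → ℝ} {h : ℕ} (hh : h < H) (s : S) :
    jointV H P rew π h s =
      ∑ a, π h s a * (rew h s a + ∑ s', P h s a s' * jointV H P rew π (h + 1) s') := by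
  rw [jointV]; simp [hh]

lemma jointV_ge {H : ℕ} {P : ℕ → S → (∀ j, A j) → S → ℝ}
    {rew π : ℕ → S → (∀ j, A j) → ℝ} {h : ℕ} (hh : ¬ h < H) (s : S) :
    jointV H P rew π h s = 0 := by
  rw [jointV]; simp [hh]

end

section
variable {S : Type*} [Fintype S] [DecidableEq S] {m : ℕ} {A : Fin m → Type*} [∀ j, Fintype (A j)]

lemma jointV_bounds {H : ℕ} {P : ℕ → S → (∀ j, A j) → S → ℝ}
    (hP : ∀ h < H, ∀ s a, IsDist (P h s a))
    {rew : ℕ → S → (∀ j, A j) → ℝ} (hrew : ∀ h < H, ∀ s a, rew h s a ∈ Set.Icc (0:ℝ) 1)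
    {π : ℕ → S → (∀ j, A j) → ℝ} (hπ : ∀ h < H, ∀ s, IsDist (π h s)) :
    ∀ n h, H - h ≤ n → ∀ s, 0 ≤ jointV H P rew π h s ∧
      (h ≤ H → jointV H P rew π h s ≤ (H:ℝ) - h) := by
  intro n
  induction n with
  | zero =>
    intro h hn s
    have hh : ¬ h < H := by omega
    rw [jointV_ge hh]
    exact ⟨le_refl 0, fun hH => by
      have : (h:ℝ) ≤ H := by exact_mod_cast hH
      linarith⟩
  | succ n ih =>
    intro h hn s
    by_cases hh : h < H
    · rw [jointV_lt hh]
      have ih' := ih (h+1) (by omega)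
      have key : ∀ a : (∀ j, A j), 0 ≤ π h s a ∧
          0 ≤ rew h s a + ∑ s', P h s a s' * jointV H P rew π (h+1) s' ∧
          rew h s a + ∑ s', P h s a s' * jointV H P rew π (h+1) s' ≤ (H:ℝ) - h := by
        intro a
        have hr := hrew h hh s a
        have hPa := hP h hh s a
        have h1 : 0 ≤ ∑ s', P h s a s' * jointV H P rew π (h+1) s' :=
          Finset.sum_nonneg fun s' _ => mul_nonneg (hPa.1 _) (ih' s').1
        have h2 : ∑ s', P h s a s' * jointV H P rew π (h+1) s' ≤ (H:ℝ) - (h+1) := by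
          calc ∑ s', P h s a s' * jointV H P rew π (h+1) s'
              ≤ ∑ s', P h s a s' * ((H:ℝ) - (h+1)) := by
                refine Finset.sum_le_sum fun s' _ => ?_
                refine mul_le_mul_of_nonneg_left ?_ (hPa.1 _)
                exact_mod_cast (ih' s').2 (by omega)
            _ = (H:ℝ) - (h+1) := by rw [← Finset.sum_mul, hPa.2, one_mul]
        refine ⟨(hπ h hh s).1 a, by linarith [hr.1], ?_⟩
        push_cast at h2 ⊢
        have : (h:ℝ) + 1 ≤ H := by exact_mod_cast hh
        linarith [hr.2]
      constructor
      · exact Finset.sum_nonneg fun a _ => mul_nonneg (key a).1 (key a).2.1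
      · intro _
        calc ∑ a, π h s a * (rew h s a + ∑ s', P h s a s' * jointV H P rew π (h+1) s')
            ≤ ∑ a, π h s a * ((H:ℝ) - h) :=
              Finset.sum_le_sum fun a _ =>
                mul_le_mul_of_nonneg_left (key a).2.2 (key a).1
          _ = (H:ℝ) - h := by rw [← Finset.sum_mul, (hπ h hh s).2, one_mul]
    · rw [jointV_ge hh]
      have : h = H ∨ H < h := by omega
      refine ⟨le_refl 0, fun hH => ?_⟩
      have : h = H := by omega
      simp [this]

lemma stateDist_nonneg {H : ℕ} {P : ℕ → S → (∀ j, A j) → S → ℝ}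
    (hP : ∀ h < H, ∀ s a, IsDist (P h s a))
    {π : ℕ → S → (∀ j, A j) → ℝ} (hπ : ∀ h < H, ∀ s, IsDist (π h s)) (s1 : S) :
    ∀ h ≤ H, ∀ s, 0 ≤ stateDist P π s1 h s := by
  intro h
  induction h with
  | zero => intro _ s; simp only [stateDist]; positivity
  | succ h ih =>
    intro hh s'
    simp only [stateDist]
    refine Finset.sum_nonneg fun s _ => Finset.sum_nonneg fun a _ => ?_
    exact mul_nonneg (mul_nonneg (ih (by omega) s) ((hπ h (by omega) s).1 a))
      ((hP h (by omega) s a).1 s')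

lemma chapman {P : ℕ → S → (∀ j, A j) → S → ℝ}
    {π : ℕ → S → (∀ j, A j) → ℝ} {s1 : S} (h : ℕ) (W : S → ℝ) :
    ∑ s, stateDist P π s1 h s * ∑ a, π h s a * ∑ s', P h s a s' * W s'
      = ∑ s', stateDist P π s1 (h+1) s' * W s' := by
  have swapS : ∀ f : S → S → ℝ, ∑ x : S, ∑ y : S, f x y = ∑ y, ∑ x, f x y :=
    fun f => Finset.sum_comm
  have swapAS : ∀ f : (∀ j, A j) → S → ℝ, ∑ x, ∑ y, f x y = ∑ y, ∑ x, f x y :=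
    fun f => Finset.sum_comm
  calc ∑ s, stateDist P π s1 h s * ∑ a, π h s a * ∑ s', P h s a s' * W s'
      = ∑ s, ∑ a, ∑ s', stateDist P π s1 h s * π h s a * P h s a s' * W s' := by
        refine Finset.sum_congr rfl fun s _ => ?_
        rw [Finset.mul_sum]
        refine Finset.sum_congr rfl fun a _ => ?_
        rw [← mul_assoc, Finset.mul_sum]
        refine Finset.sum_congr rfl fun s' _ => ?_
        ring
    _ = ∑ s, ∑ s', ∑ a, stateDist P π s1 h s * π h s a * P h s a s' * W s' :=
        Finset.sum_congr rfl fun s _ =>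
          swapAS (fun a s' => stateDist P π s1 h s * π h s a * P h s a s' * W s')
    _ = ∑ s', ∑ s, ∑ a, stateDist P π s1 h s * π h s a * P h s a s' * W s' :=
        swapS (fun s s' => ∑ a, stateDist P π s1 h s * π h s a * P h s a s' * W s')
    _ = ∑ s', stateDist P π s1 (h+1) s' * W s' := by
        refine Finset.sum_congr rfl fun s' _ => ?_
        simp only [stateDist, Finset.sum_mul]

end

/-- deterministic form of the Accelerated V-Learning with Policy
Replay guarantee with infrequent policy updates.  Rounds are indexed by
`t ∈ {0, …, T-1}` (zero-based, so round `t` here is round `t+1` of the informal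
statement; `I t` here is the last replay index `I_{t+1}`, `Vbar u`/`g u` play the roles
of `V̄^{u+1}`/`g^u`, and `πt u` plays the role of `π^{u+1}`).  The requirement
`I_t ≤ t - 1` becomes `I t ≤ t`, and `π^t = π^{I_t + 1}` becomes `πt t = πt (I t)`.
Under (a) the no-regret and optimistic sandwich conditions at the replay rounds,
(b) the bonus comparison `g (I t) ≤ 8 g t`, and (c) the pigeonhole condition, the
CCE-regret is at most `16 H B`. -/
theorem statement_3 {S : Type*} [Fintype S] [DecidableEq S] {m H T : ℕ}
    {A : Fin m → Type*} [∀ j, Fintype (A j)]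
    (P : ℕ → S → (∀ j, A j) → S → ℝ)
    (hP : ∀ h < H, ∀ s a, IsDist (P h s a))
    (rew : Fin m → ℕ → S → (∀ j, A j) → ℝ)
    (hrew : ∀ i, ∀ h < H, ∀ s a, rew i h s a ∈ Set.Icc (0 : ℝ) 1)
    (s1 : S)
    (I : ℕ → ℕ) (hI : ∀ t < T, I t ≤ t)
    (πt : ℕ → ℕ → S → (∀ j, A j) → ℝ)
    (hπt : ∀ t < T, ∀ h < H, ∀ s, IsDist (πt t h s))
    (hstick : ∀ t < T, πt t = πt (I t))
    (Vbar : ℕ → Fin m → ℕ → S → ℝ)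
    (hVbarH : ∀ u < T, ∀ i s, Vbar u i H s = 0)
    (g : ℕ → Fin m → ℕ → S → ℝ)
    (hg : ∀ u < T, ∀ i, ∀ h < H, ∀ s, 0 ≤ g u i h s)
    (B : ℝ)
    -- (a) per-state no-regret and optimistic sandwich, at the replay rounds `u = I t`
    (ha : ∀ t < T, ∀ i : Fin m, ∀ h < H, ∀ s,
      (∀ μ : A i → ℝ, IsDist μ →
        (∑ a, μ (a i) * marg i (πt (I t) h s) (restrict i a) *
            (rew i h s a + ∑ s', P h s a s' * Vbar (I t) i (h + 1) s')) -
          (∑ a, πt (I t) h s a *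
            (rew i h s a + ∑ s', P h s a s' * Vbar (I t) i (h + 1) s'))
          ≤ g (I t) i h s) ∧
      min ((∑ a, πt (I t) h s a *
              (rew i h s a + ∑ s', P h s a s' * Vbar (I t) i (h + 1) s'))
            + g (I t) i h s) ((H : ℝ) - (h : ℝ))
        ≤ Vbar (I t) i h s ∧
      Vbar (I t) i h s
        ≤ (∑ a, πt (I t) h s a *
              (rew i h s a + ∑ s', P h s a s' * Vbar (I t) i (h + 1) s'))
            + 2 * g (I t) i h s)
    -- (b) validity of infrequent updates: the bonus at the replay round is at most
    -- eight times the current bonus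
    (hb : ∀ t < T, ∀ i : Fin m, ∀ h < H, ∀ s, g (I t) i h s ≤ 8 * g t i h s)
    -- (c) pigeonhole condition
    (hc : ∀ i : Fin m, ∀ h < H,
      ∑ t ∈ Finset.range T, ∑ s, stateDist P (πt t) s1 h s * g t i h s ≤ B) :
    ∀ i : Fin m, ∀ πdag : ℕ → ℕ → S → A i → ℝ,
      (∀ t < T, ∀ h < H, ∀ s, IsDist (πdag t h s)) →
      ∑ t ∈ Finset.range T,
          max (jointV H P (rew i)
                (fun h s a => πdag t h s (a i) * marg i (πt t h s) (restrict i a)) 0 s1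
              - jointV H P (rew i) (πt t) 0 s1) 0
        ≤ 16 * H * B := by
  intro i πdag hπdag
  have key : ∀ t ∈ Finset.range T,
      max (jointV H P (rew i)
            (fun h s a => πdag t h s (a i) * marg i (πt t h s) (_root_.restrict i a)) 0 s1
          - jointV H P (rew i) (πt t) 0 s1) 0
        ≤ ∑ h ∈ Finset.range H, ∑ s, stateDist P (πt t) s1 h s * (16 * g t i h s) := by
    intro t ht'
    have ht : t < T := Finset.mem_range.mp ht'
    have hut : I t < T := Nat.lt_of_le_of_lt (hI t ht) ht
    rw [hstick t ht]
    have hπu : ∀ h < H, ∀ s, IsDist (πt (I t) h s) := hπt (I t) hut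
    have hprodDist : ∀ h < H, ∀ s, IsDist (fun a : ∀ j, A j =>
        πdag t h s (a i) * marg i (πt (I t) h s) (_root_.restrict i a)) :=
      fun h hh s => prodDist (hπdag t ht h hh s) (hπu h hh s)
    have dnn : ∀ h ≤ H, ∀ s, 0 ≤ stateDist P (πt (I t)) s1 h s :=
      stateDist_nonneg hP hπu s1
    -- optimism: jointV of the deviation policy is below Vbar
    have optA : ∀ n h, H - h ≤ n → h ≤ H → ∀ s,
        jointV H P (rew i)
            (fun h s a => πdag t h s (a i) * marg i (πt (I t) h s) (_root_.restrict i a)) h s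
          ≤ Vbar (I t) i h s := by
      intro n
      induction n with
      | zero =>
        intro h hn hH s
        have hEq : h = H := by omega
        rw [hEq, jointV_ge (lt_irrefl H), hVbarH (I t) hut i s]
      | succ n ih =>
        intro h hn hH s
        by_cases hh : h < H
        · have ha' := ha t ht i h hh s
          have step1 : jointV H P (rew i)
              (fun h s a => πdag t h s (a i) * marg i (πt (I t) h s) (_root_.restrict i a)) h s
              ≤ ∑ a, πdag t h s (a i) * marg i (πt (I t) h s) (_root_.restrict i a) *
                  (rew i h s a + ∑ s', P h s a s' * Vbar (I t) i (h + 1) s') := by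
            rw [jointV_lt hh]
            refine Finset.sum_le_sum fun a _ => mul_le_mul_of_nonneg_left ?_
              ((hprodDist h hh s).1 a)
            refine add_le_add le_rfl (Finset.sum_le_sum fun s' _ => ?_)
            exact mul_le_mul_of_nonneg_left (ih (h+1) (by omega) (by omega) s')
              ((hP h hh s a).1 s')
          have step2 := ha'.1 (πdag t h s) (hπdag t ht h hh s)
          have step3 : jointV H P (rew i)
              (fun h s a => πdag t h s (a i) * marg i (πt (I t) h s) (_root_.restrict i a)) h s
              ≤ (H : ℝ) - h :=
            (jointV_bounds hP (hrew i) hprodDist (H - h) h le_rfl s).2 hH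
          refine le_trans (le_min (by linarith) step3) ha'.2.1
        · have hEq : h = H := by omega
          rw [hEq, jointV_ge (lt_irrefl H), hVbarH (I t) hut i s]
    -- value difference telescoping
    have gapB : ∀ n h, H - h ≤ n → h ≤ H →
        ∑ s, stateDist P (πt (I t)) s1 h s *
            (Vbar (I t) i h s - jointV H P (rew i) (πt (I t)) h s)
          ≤ ∑ h' ∈ Finset.Ico h H, ∑ s, stateDist P (πt (I t)) s1 h' s *
              (2 * g (I t) i h' s) := by
      intro n
      induction n with
      | zero =>
        intro h hn hH
        have hEq : h = H := by omega
        rw [hEq]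
        simp [hVbarH (I t) hut i, jointV_ge (lt_irrefl H)]
      | succ n ih =>
        intro h hn hH
        by_cases hh : h < H
        · have point : ∀ s, Vbar (I t) i h s - jointV H P (rew i) (πt (I t)) h s
              ≤ 2 * g (I t) i h s + ∑ a, πt (I t) h s a * ∑ s', P h s a s' *
                  (Vbar (I t) i (h+1) s' - jointV H P (rew i) (πt (I t)) (h+1) s') := by
            intro s
            have h3 := (ha t ht i h hh s).2.2
            rw [jointV_lt hh]
            have inner : ∀ a : ∀ j, A j, ∑ s', P h s a s' *
                  (Vbar (I t) i (h+1) s' - jointV H P (rew i) (πt (I t)) (h+1) s')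
                = (∑ s', P h s a s' * Vbar (I t) i (h+1) s')
                  - ∑ s', P h s a s' * jointV H P (rew i) (πt (I t)) (h+1) s' := by
              intro a
              rw [← Finset.sum_sub_distrib]
              exact Finset.sum_congr rfl fun s' _ => mul_sub _ _ _
            have expand : ∑ a, πt (I t) h s a * ∑ s', P h s a s' *
                  (Vbar (I t) i (h+1) s' - jointV H P (rew i) (πt (I t)) (h+1) s')
                = (∑ a, πt (I t) h s a *
                    (rew i h s a + ∑ s', P h s a s' * Vbar (I t) i (h+1) s'))
                  - ∑ a, πt (I t) h s a *
                    (rew i h s a + ∑ s', P h s a s' *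
                      jointV H P (rew i) (πt (I t)) (h+1) s') := by
              rw [← Finset.sum_sub_distrib]
              refine Finset.sum_congr rfl fun a _ => ?_
              rw [inner a]; ring
            linarith [expand]
          calc ∑ s, stateDist P (πt (I t)) s1 h s *
                (Vbar (I t) i h s - jointV H P (rew i) (πt (I t)) h s)
              ≤ ∑ s, stateDist P (πt (I t)) s1 h s *
                  (2 * g (I t) i h s + ∑ a, πt (I t) h s a * ∑ s', P h s a s' *
                    (Vbar (I t) i (h+1) s' - jointV H P (rew i) (πt (I t)) (h+1) s')) :=
                Finset.sum_le_sum fun s _ =>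
                  mul_le_mul_of_nonneg_left (point s) (dnn h (le_of_lt hh) s)
            _ = (∑ s, stateDist P (πt (I t)) s1 h s * (2 * g (I t) i h s))
                + ∑ s, stateDist P (πt (I t)) s1 h s * ∑ a, πt (I t) h s a *
                    ∑ s', P h s a s' *
                      (Vbar (I t) i (h+1) s' - jointV H P (rew i) (πt (I t)) (h+1) s') := by
                rw [← Finset.sum_add_distrib]
                exact Finset.sum_congr rfl fun s _ => by ring
            _ = (∑ s, stateDist P (πt (I t)) s1 h s * (2 * g (I t) i h s))
                + ∑ s', stateDist P (πt (I t)) s1 (h+1) s' *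
                    (Vbar (I t) i (h+1) s' - jointV H P (rew i) (πt (I t)) (h+1) s') := by
                rw [chapman]
            _ ≤ (∑ s, stateDist P (πt (I t)) s1 h s * (2 * g (I t) i h s))
                + ∑ h' ∈ Finset.Ico (h+1) H, ∑ s, stateDist P (πt (I t)) s1 h' s *
                    (2 * g (I t) i h' s) :=
                add_le_add le_rfl (ih (h+1) (by omega) (by omega))
            _ = ∑ h' ∈ Finset.Ico h H, ∑ s, stateDist P (πt (I t)) s1 h' s *
                  (2 * g (I t) i h' s) :=
                (Finset.sum_eq_sum_Ico_succ_bot hh (fun h' => ∑ s,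
                  stateDist P (πt (I t)) s1 h' s * (2 * g (I t) i h' s))).symm
        · have hEq : h = H := by omega
          rw [hEq]
          simp [hVbarH (I t) hut i, jointV_ge (lt_irrefl H)]
    have d0 : ∀ X : S → ℝ, ∑ s, stateDist P (πt (I t)) s1 0 s * X s = X s1 := by
      intro X
      simp [stateDist, ite_mul]
    have hB0 := gapB H 0 (by omega) (by omega)
    rw [d0, Nat.Ico_zero_eq_range] at hB0
    have hA0 := optA H 0 (by omega) (by omega) s1
    have final : ∑ h' ∈ Finset.range H, ∑ s, stateDist P (πt (I t)) s1 h' s *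
          (2 * g (I t) i h' s)
        ≤ ∑ h' ∈ Finset.range H, ∑ s, stateDist P (πt (I t)) s1 h' s *
          (16 * g t i h' s) := by
      refine Finset.sum_le_sum fun h' hh' => Finset.sum_le_sum fun s _ => ?_
      have hh'' : h' < H := Finset.mem_range.mp hh'
      refine mul_le_mul_of_nonneg_left ?_ (dnn h' (le_of_lt hh'') s)
      have := hb t ht i h' hh'' s
      linarith
    refine max_le (by linarith) ?_
    refine Finset.sum_nonneg fun h' hh' => Finset.sum_nonneg fun s _ => ?_
    have hh'' : h' < H := Finset.mem_range.mp hh'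
    exact mul_nonneg (dnn h' (le_of_lt hh'') s)
      (by linarith [hg t ht i h' hh'' s])
  calc ∑ t ∈ Finset.range T,
        max (jointV H P (rew i)
              (fun h s a => πdag t h s (a i) * marg i (πt t h s) (_root_.restrict i a)) 0 s1
            - jointV H P (rew i) (πt t) 0 s1) 0
      ≤ ∑ t ∈ Finset.range T, ∑ h ∈ Finset.range H, ∑ s,
          stateDist P (πt t) s1 h s * (16 * g t i h s) := Finset.sum_le_sum key
    _ = 16 * ∑ h ∈ Finset.range H, ∑ t ∈ Finset.range T, ∑ s,
          stateDist P (πt t) s1 h s * g t i h s := by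
        rw [Finset.sum_comm]
        rw [Finset.mul_sum]
        refine Finset.sum_congr rfl fun h _ => ?_
        rw [Finset.mul_sum]
        refine Finset.sum_congr rfl fun t _ => ?_
        rw [Finset.mul_sum]
        refine Finset.sum_congr rfl fun s _ => ?_
        ring
    _ ≤ 16 * ∑ h ∈ Finset.range H, B := by
        refine mul_le_mul_of_nonneg_left ?_ (by norm_num)
        exact Finset.sum_le_sum fun h hh => hc i h (Finset.mem_range.mp hh)
    _ = 16 * H * B := by
        rw [Finset.sum_const, Finset.card_range]
        ring
end

section
/- (All-policy linear completeness implies few action-relevant states.) Let MG be an m-player finite Markov game and, for each player i ∈ [m], let φ_i : S × A_i → ℝ^d be a feature map. Assume all-policy completeness: for every i ∈ [m], h ∈ [H], every function V : S → [0, H], and every Markov joint policy π, there exists θ ∈ ℝ^d such that for all (s, a_i) ∈ S × A_i: φ_i(s, a_i)^⊤ θ = E_{a_{-i} ∼ π_{-i,h}(·|s)}[ r_{i,h}(s, (a_i, a_{-i})) + E_{s' ∼ P_h(·|s,(a_i,a_{-i}))}[ V(s') ] ]. Then for every i ∈ [m] and h ∈ [H], the number of states s ∈ S for which there exists a_i ∈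 A_i such that the map a_{-i} ↦ P_h(·|s, (a_i, a_{-i})) is non-constant is at most d. Consequently, if m ≥ 2, then for each h ∈ [H] there are at most d·m states s at which the transition P_h(·|s, ·) depends on the joint action. -/
open Finset

lemma combine_apply_self {m : ℕ} {A : Fin m → Type*} (i : Fin m) (ai : A i)
    (an : ∀ j : {j : Fin m // j ≠ i}, A j.1) : combine i ai an i = ai := by
  simp [combine]

lemma combine_apply_ne {m : ℕ} {A : Fin m → Type*} (i : Fin m) (ai : A i)
    (an : ∀ j : {j : Fin m // j ≠ i}, A j.1) {j : Fin m} (h : j ≠ i) :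
    combine i ai an j = an ⟨j, h⟩ := by
  simp [combine, h]

lemma combine_eq_iff {m : ℕ} {A : Fin m → Type*} (i : Fin m) (ai ai' : A i)
    (an an' : ∀ j : {j : Fin m // j ≠ i}, A j.1) :
    combine i ai an = combine i ai' an' ↔ ai = ai' ∧ an = an' := by
  constructor
  · intro h
    refine ⟨?_, ?_⟩
    · have := congrFun h i
      rwa [combine_apply_self, combine_apply_self] at this
    · funext j
      have := congrFun h j.1
      rwa [combine_apply_ne i ai an j.2, combine_apply_ne i ai' an' j.2] at this
  · rintro ⟨rfl, rfl⟩; rfl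

lemma key_lemma {S : Type*} [Fintype S] {m H d : ℕ} {A : Fin m → Type*}
    [∀ j, Fintype (A j)] [∀ j, Nonempty (A j)]
    (P : ℕ → S → (∀ j, A j) → S → ℝ)
    (rew : Fin m → ℕ → S → (∀ j, A j) → ℝ)
    (φ : ∀ i : Fin m, S → A i → Fin d → ℝ)
    (i : Fin m) (h : ℕ) (hh : h < H)
    (hcomplete : ∀ V : S → ℝ, (∀ s, V s ∈ Set.Icc (0 : ℝ) H) →
      ∀ π : ℕ → S → (∀ j, A j) → ℝ, (∀ h' < H, ∀ s, IsDist (π h' s)) →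
      ∃ θ : Fin d → ℝ, ∀ s (ai : A i),
        (∑ k, φ i s ai k * θ k) =
          ∑ an, marg i (π h s) an *
            (rew i h s (combine i ai an) +
              ∑ s', P h s (combine i ai an) s' * V s'))
    (σ : S → ∀ j : {j : Fin m // j ≠ i}, A j.1) (V : S → ℝ)
    (hV : ∀ s, V s ∈ Set.Icc (0 : ℝ) H) :
    ∃ θ : Fin d → ℝ, ∀ s (ai : A i),
      (∑ k, φ i s ai k * θ k) =
        rew i h s (combine i ai (σ s)) +
          ∑ s', P h s (combine i ai (σ s)) s' * V s' := by
  classical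
  set c : S → A i := fun _ => Classical.arbitrary _ with hc
  have hdist : ∀ h' < H, ∀ s, IsDist
      (fun a => if a = combine i (c s) (σ s) then (1:ℝ) else 0) := by
    intro h' _ s
    constructor
    · intro a; positivity
    · simp [Finset.sum_ite_eq']
  obtain ⟨θ, hθ⟩ := hcomplete V hV
    (fun _ s a => if a = combine i (c s) (σ s) then 1 else 0) hdist
  refine ⟨θ, fun s ai => ?_⟩
  rw [hθ s ai]
  have hmarg : ∀ an, marg i
      (fun a => if a = combine i (c s) (σ s) then 1 else 0) an
      = if an = σ s then 1 else 0 := by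
    intro an
    unfold marg
    have : ∀ ai' : A i,
        (if combine i ai' an = combine i (c s) (σ s) then (1:ℝ) else 0)
          = if ai' = c s ∧ an = σ s then 1 else 0 := by
      intro ai'
      simp [combine_eq_iff]
    rw [Finset.sum_congr rfl (fun ai' _ => this ai')]
    by_cases han : an = σ s
    · simp [han]
    · simp [han]
  calc ∑ an, marg i (fun a => if a = combine i (c s) (σ s) then 1 else 0) an *
          (rew i h s (combine i ai an) +
            ∑ s', P h s (combine i ai an) s' * V s')
      = ∑ an, (if an = σ s then (1:ℝ) else 0) *
          (rew i h s (combine i ai an) +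
            ∑ s', P h s (combine i ai an) s' * V s') := by
        exact Finset.sum_congr rfl (fun an _ => by rw [hmarg an])
    _ = _ := by
        rw [Finset.sum_congr rfl
          (fun an _ => ite_mul (an = σ s) 1 0 _)]
        simp [Finset.sum_ite_eq']

lemma core_bound {S : Type*} [Fintype S] {m H d : ℕ} {A : Fin m → Type*}
    [∀ j, Fintype (A j)]
    (P : ℕ → S → (∀ j, A j) → S → ℝ)
    (rew : Fin m → ℕ → S → (∀ j, A j) → ℝ)
    (φ : ∀ i : Fin m, S → A i → Fin d → ℝ)
    (i : Fin m) (h : ℕ) (hh : h < H)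
    (hcomplete : ∀ V : S → ℝ, (∀ s, V s ∈ Set.Icc (0 : ℝ) H) →
      ∀ π : ℕ → S → (∀ j, A j) → ℝ, (∀ h' < H, ∀ s, IsDist (π h' s)) →
      ∃ θ : Fin d → ℝ, ∀ s (ai : A i),
        (∑ k, φ i s ai k * θ k) =
          ∑ an, marg i (π h s) an *
            (rew i h s (combine i ai an) +
              ∑ s', P h s (combine i ai an) s' * V s')) :
    Set.ncard {s : S | ∃ ai : A i, ∃ an an',
      P h s (combine i ai an) ≠ P h s (combine i ai an')} ≤ d := by
  classical
  by_cases hne : ∀ j, Nonempty (A j)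
  case neg =>
    push_neg at hne
    obtain ⟨j, hj⟩ := hne
    have he : {s : S | ∃ ai : A i, ∃ an an',
        P h s (combine i ai an) ≠ P h s (combine i ai an')} = ∅ := by
      apply Set.subset_empty_iff.mp
      rintro s ⟨ai, an, an', -⟩
      exact absurd ⟨combine i ai an j⟩ (not_nonempty_iff.mpr hj)
    rw [he, Set.ncard_empty]
    exact Nat.zero_le d
  case pos =>
  haveI : ∀ j, Nonempty (A j) := hne
  set B : Set S := {s : S | ∃ ai : A i, ∃ an an',
      P h s (combine i ai an) ≠ P h s (combine i ai an')} with hB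
  have hwit : ∀ s : S, ∃ (ai : A i) (an an' : ∀ j : {j : Fin m // j ≠ i}, A j.1),
      s ∈ B → P h s (combine i ai an) ≠ P h s (combine i ai an') := by
    intro s
    by_cases hs : s ∈ B
    · obtain ⟨ai, an, an', hd⟩ := hs
      exact ⟨ai, an, an', fun _ => hd⟩
    · exact ⟨Classical.arbitrary _, Classical.arbitrary _, Classical.arbitrary _,
        fun hmem => absurd hmem hs⟩
  choose ca cn cn' hPne using hwit
  have hH0 : (0:ℝ) ≤ H := Nat.cast_nonneg H
  have hH1 : (1:ℝ) ≤ H := by exact_mod_cast Nat.one_le_iff_ne_zero.mpr (by omega)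
  have hV0 : ∀ s : S, (0:ℝ) ∈ Set.Icc (0:ℝ) H := fun _ => ⟨le_refl _, hH0⟩
  haveI : Fintype ↥B := Set.Finite.fintype (Set.toFinite B)
  have hli : LinearIndependent ℝ (fun s : ↥B => φ i s.1 (ca s.1)) := by
    rw [Fintype.linearIndependent_iff]
    intro c hc s0
    -- pointwise version of hc
    have hck : ∀ k, ∑ s : ↥B, c s * φ i s.1 (ca s.1) k = 0 := by
      intro k
      have := congrFun hc k
      simpa [Finset.sum_apply] using this
    -- choose a state where transitions differ
    have hex : ∃ t, P h s0.1 (combine i (ca s0.1) (cn s0.1)) t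
        ≠ P h s0.1 (combine i (ca s0.1) (cn' s0.1)) t := by
      by_contra hall
      push_neg at hall
      exact (hPne s0.1 s0.2) (funext hall)
    obtain ⟨t, ht⟩ := hex
    set V : S → ℝ := fun s' => if s' = t then 1 else 0 with hVdef
    have hV : ∀ s, V s ∈ Set.Icc (0:ℝ) H := by
      intro s
      by_cases hs : s = t <;> simp [hVdef, hs, hH0, hH1]
    -- the generic identity
    have main0 : ∀ σa σb : S → ∀ j : {j : Fin m // j ≠ i}, A j.1,
        ∑ s : ↥B, c s * (∑ s', (P h s.1 (combine i (ca s.1) (σa s.1)) s'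
          - P h s.1 (combine i (ca s.1) (σb s.1)) s') * V s') = 0 := by
      intro σa σb
      obtain ⟨θ1, hθ1⟩ := key_lemma P rew φ i h hh hcomplete σa V hV
      obtain ⟨θ2, hθ2⟩ := key_lemma P rew φ i h hh hcomplete σa (fun _ => 0) hV0
      obtain ⟨θ3, hθ3⟩ := key_lemma P rew φ i h hh hcomplete σb V hV
      obtain ⟨θ4, hθ4⟩ := key_lemma P rew φ i h hh hcomplete σb (fun _ => 0) hV0
      set L : Fin d → ℝ := fun k => θ1 k - θ2 k - θ3 k + θ4 k with hL
      have hDs : ∀ s : ↥B, (∑ s', (P h s.1 (combine i (ca s.1) (σa s.1)) s'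
          - P h s.1 (combine i (ca s.1) (σb s.1)) s') * V s')
          = ∑ k, φ i s.1 (ca s.1) k * L k := by
        intro s
        have e1 := hθ1 s.1 (ca s.1)
        have e2 := hθ2 s.1 (ca s.1)
        have e3 := hθ3 s.1 (ca s.1)
        have e4 := hθ4 s.1 (ca s.1)
        simp only [mul_zero, Finset.sum_const_zero, add_zero] at e2 e4
        have expand : ∑ k, φ i s.1 (ca s.1) k * L k
            = (∑ k, φ i s.1 (ca s.1) k * θ1 k) - (∑ k, φ i s.1 (ca s.1) k * θ2 k)
              - (∑ k, φ i s.1 (ca s.1) k * θ3 k) + (∑ k, φ i s.1 (ca s.1) k * θ4 k) := by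
          rw [← Finset.sum_sub_distrib, ← Finset.sum_sub_distrib, ← Finset.sum_add_distrib]
          exact Finset.sum_congr rfl (fun k _ => by rw [hL]; ring)
        rw [expand, e1, e2, e3, e4]
        have hsplit : ∑ s', (P h s.1 (combine i (ca s.1) (σa s.1)) s'
            - P h s.1 (combine i (ca s.1) (σb s.1)) s') * V s'
            = (∑ s', P h s.1 (combine i (ca s.1) (σa s.1)) s' * V s')
              - ∑ s', P h s.1 (combine i (ca s.1) (σb s.1)) s' * V s' := by
          rw [← Finset.sum_sub_distrib]
          exact Finset.sum_congr rfl (fun s' _ => by ring)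
        rw [hsplit]
        ring
      calc ∑ s : ↥B, c s * (∑ s', (P h s.1 (combine i (ca s.1) (σa s.1)) s'
              - P h s.1 (combine i (ca s.1) (σb s.1)) s') * V s')
          = ∑ s : ↥B, c s * ∑ k, φ i s.1 (ca s.1) k * L k := by
            exact Finset.sum_congr rfl (fun s _ => by rw [hDs s])
        _ = ∑ k, (∑ s : ↥B, c s * φ i s.1 (ca s.1) k) * L k := by
            simp_rw [Finset.mul_sum, Finset.sum_mul]
            rw [Finset.sum_comm]
            exact Finset.sum_congr rfl (fun k _ =>
              Finset.sum_congr rfl (fun s _ => by ring))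
        _ = 0 := by
            rw [Finset.sum_congr rfl (fun k _ => by rw [hck k])]
            simp
    have E1 := main0 cn cn'
    have E2 := main0 (Function.update cn s0.1 (cn' s0.1)) (Function.update cn' s0.1 (cn s0.1))
    have E3 : ∑ s : ↥B,
        (c s * (∑ s', (P h s.1 (combine i (ca s.1) (cn s.1)) s'
          - P h s.1 (combine i (ca s.1) (cn' s.1)) s') * V s')
        - c s * (∑ s', (P h s.1 (combine i (ca s.1) (Function.update cn s0.1 (cn' s0.1) s.1)) s'
          - P h s.1 (combine i (ca s.1) (Function.update cn' s0.1 (cn s0.1) s.1)) s') * V s')) = 0 := by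
      rw [Finset.sum_sub_distrib, E1, E2, sub_zero]
    rw [Finset.sum_eq_single_of_mem s0 (Finset.mem_univ s0)] at E3
    · rw [Function.update_self, Function.update_self] at E3
      set X : ℝ := ∑ s', (P h s0.1 (combine i (ca s0.1) (cn s0.1)) s'
          - P h s0.1 (combine i (ca s0.1) (cn' s0.1)) s') * V s' with hX
      have hswap : (∑ s', (P h s0.1 (combine i (ca s0.1) (cn' s0.1)) s'
          - P h s0.1 (combine i (ca s0.1) (cn s0.1)) s') * V s') = -X := by
        rw [hX, ← Finset.sum_neg_distrib]
        exact Finset.sum_congr rfl (fun s' _ => by ring)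
      rw [hswap] at E3
      have hXval : X = P h s0.1 (combine i (ca s0.1) (cn s0.1)) t
          - P h s0.1 (combine i (ca s0.1) (cn' s0.1)) t := by
        rw [hX, hVdef]
        simp [mul_ite, Finset.sum_ite_eq']
      have hXne : X ≠ 0 := by
        rw [hXval]
        exact sub_ne_zero.mpr ht
      have : c s0 * X = 0 := by nlinarith [E3]
      rcases mul_eq_zero.mp this with h1 | h1
      · exact h1
      · exact absurd h1 hXne
    · intro b _ hb
      have hb1 : b.1 ≠ s0.1 := fun hq => hb (Subtype.ext hq)
      rw [Function.update_of_ne hb1, Function.update_of_ne hb1, sub_self]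
  have hcard : Fintype.card ↥B ≤ d := by
    have := hli.fintype_card_le_finrank
    rwa [Module.finrank_fin_fun] at this
  rw [Set.ncard_eq_toFinset_card' B, Set.toFinset_card]
  exact hcard

lemma exists_single_coord {m : ℕ} {A : Fin m → Type*} [∀ j, DecidableEq (A j)] {β : Type*}
    (f : (∀ j, A j) → β) :
    ∀ (n : ℕ) (a a' : ∀ j, A j),
      (Finset.univ.filter (fun j => a j ≠ a' j)).card ≤ n →
      f a ≠ f a' →
      ∃ (j : Fin m) (b b' : ∀ k, A k), (∀ k, k ≠ j → b k = b' k) ∧ f b ≠ f b' := by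
  classical
  intro n
  induction n with
  | zero =>
    intro a a' hc hne
    exfalso
    apply hne
    have : a = a' := by
      funext j
      by_contra hj
      have : j ∈ Finset.univ.filter (fun j => a j ≠ a' j) := by simp [hj]
      have := Finset.card_pos.mpr ⟨j, this⟩
      omega
    rw [this]
  | succ n ih =>
    intro a a' hc hne
    have hex : ∃ j, a j ≠ a' j := by
      by_contra hall
      push_neg at hall
      exact hne (by rw [funext hall])
    obtain ⟨j, hj⟩ := hex
    set a'' := Function.update a j (a' j) with ha''
    by_cases h2 : f a = f a''
    · have hne' : f a'' ≠ f a' := by rw [← h2]; exact hne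
      refine ih a'' a' ?_ hne'
      have hsub : Finset.univ.filter (fun k => a'' k ≠ a' k) ⊆
          (Finset.univ.filter (fun k => a k ≠ a' k)).erase j := by
        intro k hk
        simp only [Finset.mem_filter, Finset.mem_univ, true_and] at hk
        rcases eq_or_ne k j with rfl | hkj
        · exact absurd (by simp [ha'']) hk
        · simp only [Finset.mem_erase, Finset.mem_filter, Finset.mem_univ, true_and]
          refine ⟨hkj, ?_⟩
          rwa [ha'', Function.update_of_ne hkj] at hk
      have hmem : j ∈ Finset.univ.filter (fun k => a k ≠ a' k) := by simp [hj]
      have := Finset.card_le_card hsub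
      have := Finset.card_erase_of_mem hmem
      omega
    · exact ⟨j, a, a'', fun k hk => (Function.update_of_ne hk _ _).symm, h2⟩

lemma combine_eta {m : ℕ} {A : Fin m → Type*} (i : Fin m) (a : ∀ j, A j) :
    combine i (a i) (fun j => a j.1) = a := by
  funext j
  by_cases h : j = i
  · subst h; exact combine_apply_self _ _ _
  · exact combine_apply_ne _ _ _ h

/-- all-policy linear completeness implies few action-relevant
states.  In a finite Markov game with feature maps `φ i : S × A_i → ℝ^d`, if for every
player `i`, step `h < H`, function `V : S → [0, H]` and Markov joint policy `π` the
Bellman backup `(s, aᵢ) ↦ E_{a₋ᵢ ∼ π₋ᵢ,h(·|s)}[r_{i,h}(s,(aᵢ,a₋ᵢ)) + E_{s'}[V s']]`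
is linear in the features, then for every `i` and `h < H` there are at most `d` states
at which, for some own action `aᵢ`, the transition kernel depends on the other players'
actions; consequently, if `m ≥ 2`, at most `d * m` states have transitions depending on
the joint action at step `h`. -/
theorem statement_9 {S : Type*} [Fintype S] {m H d : ℕ} {A : Fin m → Type*}
    [∀ j, Fintype (A j)]
    (P : ℕ → S → (∀ j, A j) → S → ℝ)
    (hP : ∀ h < H, ∀ s a, IsDist (P h s a))
    (rew : Fin m → ℕ → S → (∀ j, A j) → ℝ)
    (hrew : ∀ i, ∀ h < H, ∀ s a, rew i h s a ∈ Set.Icc (0 : ℝ) 1)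
    (φ : ∀ i : Fin m, S → A i → Fin d → ℝ)
    (hcomplete : ∀ i : Fin m, ∀ h < H, ∀ V : S → ℝ, (∀ s, V s ∈ Set.Icc (0 : ℝ) H) →
      ∀ π : ℕ → S → (∀ j, A j) → ℝ, (∀ h' < H, ∀ s, IsDist (π h' s)) →
      ∃ θ : Fin d → ℝ, ∀ s (ai : A i),
        (∑ k, φ i s ai k * θ k) =
          ∑ an, marg i (π h s) an *
            (rew i h s (combine i ai an) +
              ∑ s', P h s (combine i ai an) s' * V s')) :
    (∀ i : Fin m, ∀ h < H,
      Set.ncard {s : S | ∃ ai : A i, ∃ an an',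
        P h s (combine i ai an) ≠ P h s (combine i ai an')} ≤ d) ∧
    (2 ≤ m → ∀ h < H,
      Set.ncard {s : S | ∃ a a', P h s a ≠ P h s a'} ≤ d * m) := by
  classical
  have part1 : ∀ i : Fin m, ∀ h < H,
      Set.ncard {s : S | ∃ ai : A i, ∃ an an',
        P h s (combine i ai an) ≠ P h s (combine i ai an')} ≤ d :=
    fun i h hh => core_bound P rew φ i h hh (hcomplete i h hh)
  refine ⟨part1, fun hm h hh => ?_⟩
  -- part 2
  set B : Fin m → Set S := fun i => {s : S | ∃ ai : A i, ∃ an an',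
      P h s (combine i ai an) ≠ P h s (combine i ai an')} with hBdef
  have hsub : {s : S | ∃ a a', P h s a ≠ P h s a'} ⊆ ⋃ i : Fin m, B i := by
    rintro s ⟨a, a', hne⟩
    obtain ⟨j, b, b', hbb', hfne⟩ := exists_single_coord (P h s) m a a'
      (le_trans (Finset.card_filter_le _ _) (by simp)) hne
    -- pick i ≠ j
    have : ∃ i : Fin m, i ≠ j := by
      rcases eq_or_ne j ⟨0, by omega⟩ with rfl | hj0
      · exact ⟨⟨1, by omega⟩, by simp [Fin.ext_iff]⟩
      · exact ⟨⟨0, by omega⟩, fun hq => hj0 hq.symm⟩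
    obtain ⟨i, hij⟩ := this
    refine Set.mem_iUnion.mpr ⟨i, b i, fun k => b k.1, fun k => b' k.1, ?_⟩
    have hb : combine i (b i) (fun k => b k.1) = b := combine_eta i b
    have hb' : combine i (b i) (fun k => b' k.1) = b' := by
      rw [hbb' i hij]
      exact combine_eta i b'
    rw [hb, hb']
    exact hfne
  set F : Fin m → Finset S := fun i => (Set.toFinite (B i)).toFinset with hFdef
  have hUeq : (⋃ i : Fin m, B i) = ↑(Finset.univ.biUnion F) := by
    ext s
    simp only [hFdef, Set.Finite.mem_toFinset, Finset.coe_biUnion, Finset.coe_univ, Set.mem_iUnion, Set.mem_univ, true_and, Set.iUnion_true, Finset.mem_coe]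
  calc Set.ncard {s : S | ∃ a a', P h s a ≠ P h s a'}
      ≤ Set.ncard (⋃ i : Fin m, B i) := Set.ncard_le_ncard hsub (Set.toFinite _)
    _ = (Finset.univ.biUnion F).card := by rw [hUeq, Set.ncard_coe_finset]
    _ ≤ ∑ i : Fin m, (F i).card := Finset.card_biUnion_le
    _ ≤ ∑ _i : Fin m, d := by
        refine Finset.sum_le_sum (fun i _ => ?_)
        have := part1 i h hh
        rwa [Set.ncard_eq_toFinset_card (B i) (Set.toFinite _)] at this
    _ = d * m := by simp [mul_comm]
end
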